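/- arXiv:2108.05266 — 7 statements merged into one kernel-verified Lean document; each statement's English description precedes it below -/
import Mathlib

section
/- The doubly exponential sequence defined by a(1) = 1 and a(d+1) = a(d)^2 + a(d) satisfies a(d) ≥ ⌊(3/2)^(2^(d-1))⌋ for all d ≥ 1. -/
/-- The doubly exponential sequence with `a 1 = 1` and `a (d+1) = a d ^ 2 + a d`
satisfies `a d ≥ ⌊(3/2) ^ (2 ^ (d-1))⌋` for all `d ≥ 1`. -/
theorem stmt_0 (a : ℕ → ℕ) (h1 : a 1 = 1)
    (hrec : ∀ d, 1 ≤ d → a (d + 1) = (a d) ^ 2 + a d) :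
    ∀ d, 1 ≤ d → ⌊((3 : ℚ) / 2) ^ (2 ^ (d - 1))⌋ ≤ (a d : ℤ) := by
  have key : ∀ d, 1 ≤ d → ((3 : ℚ) / 2) ^ (2 ^ (d - 1)) ≤ (a d : ℚ) + 1 / 2 := by
    intro d hd
    induction d, hd using Nat.le_induction with
    | base => simp [h1]; norm_num
    | succ n hn ih =>
      have h0 : (0 : ℚ) ≤ ((3 : ℚ) / 2) ^ (2 ^ (n - 1)) := by positivity
      have hsq := mul_le_mul ih ih h0 (by positivity)
      rw [← pow_add] at hsq
      have hexp : 2 ^ (n - 1) + 2 ^ (n - 1) = 2 ^ (n + 1 - 1) := by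
        obtain ⟨m, rfl⟩ := Nat.exists_eq_add_of_le hn
        have e1 : 1 + m - 1 = m := by omega
        have e2 : 1 + m + 1 - 1 = m + 1 := by omega
        rw [e1, e2, pow_succ]
        ring
      rw [hexp] at hsq
      refine hsq.trans ?_
      rw [hrec n hn]
      push_cast
      nlinarith [sq_nonneg ((a n : ℚ))]
  intro d hd
  have h := key d hd
  have hf : (⌊((3 : ℚ) / 2) ^ (2 ^ (d - 1))⌋ : ℚ) ≤ (a d : ℚ) + 1 / 2 :=
    (Int.floor_le _).trans h
  have : (⌊((3 : ℚ) / 2) ^ (2 ^ (d - 1))⌋ : ℚ) < (a d : ℚ) + 1 := by linarith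
  exact_mod_cast Int.lt_add_one_iff.mp (by exact_mod_cast this)
end

section
/- Let f ∈ F_n and x an instance with f(x) = 1, and let ℓ be a literal satisfied by x. Then the set of sufficient reasons for x given f equals the union of (i) the sufficient reasons for x given (f | ℓ) ∧ (f | ℓ̄), and (ii) the terms ℓ ∧ t_ℓ where t_ℓ is a sufficient reason for x given f | ℓ such that t_ℓ does not imply f | ℓ̄. -/
/-- A term (or clause) over variables `V`: a finite set of literals,
where a literal is a pair (variable, polarity). -/
abbrev Term (V : Type*) := Finset (V × Bool)

/-- An assignment `y` satisfies a term `t` if all its literals hold. -/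
def Term.sat {V : Type*} (t : Term V) (y : V → Bool) : Prop :=
  ∀ p ∈ t, y p.1 = p.2

/-- A term is consistent if no variable occurs with both polarities. -/
def Term.consistent {V : Type*} (t : Term V) : Prop :=
  ∀ v : V, ¬((v, true) ∈ t ∧ (v, false) ∈ t)

/-- `t` is an implicant of `f`: a consistent term all of whose models are models of `f`. -/
def Implicant {V : Type*} (f : (V → Bool) → Bool) (t : Term V) : Prop :=
  Term.consistent t ∧ ∀ y, Term.sat t y → f y = true

/-- `t` is a prime implicant of `f`: an implicant no proper subterm of which is an implicant. -/
def PrimeImplicant {V : Type*} (f : (V → Bool) → Bool) (t : Term V) : Prop :=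
  Implicant f t ∧ ∀ s ⊂ t, ¬ Implicant f s

/-- A sufficient reason for `x` given `f`: a prime implicant of `f` covering `x`. -/
def SuffReason {V : Type*} (f : (V → Bool) → Bool) (x : V → Bool) (t : Term V) : Prop :=
  PrimeImplicant f t ∧ Term.sat t x

/-- Conditioning of `f` by the literal `ℓ`: substitute the value making `ℓ` true. -/
def condF {V : Type*} [DecidableEq V] (f : (V → Bool) → Bool) (l : V × Bool) :
    (V → Bool) → Bool :=
  fun y => f (Function.update y l.1 l.2)

section Helpers
variable {V : Type*} [DecidableEq V]

lemma vfree_of_notmem {t : Term V} {v : V}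
    (h1 : (v, true) ∉ t) (h2 : (v, false) ∉ t) : ∀ p ∈ t, p.1 ≠ v := by
  rintro ⟨w, c⟩ hm rfl
  cases c
  · exact h2 hm
  · exact h1 hm

lemma sat_update {t : Term V} {v : V} (hf : ∀ p ∈ t, p.1 ≠ v) (y : V → Bool) (c : Bool) :
    Term.sat t (Function.update y v c) ↔ Term.sat t y := by
  constructor <;> intro h p hp <;> have h' := h p hp <;> have hne := hf p hp
  · rwa [Function.update_of_ne hne] at h'
  · rwa [Function.update_of_ne hne]

lemma consistent_subset {s t : Term V} (hst : s ⊆ t) (h : t.consistent) : s.consistent :=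
  fun v hv => h v ⟨hst hv.1, hst hv.2⟩

lemma consistent_insert {t : Term V} {v : V} {b : Bool} (hc : t.consistent)
    (hf : ∀ p ∈ t, p.1 ≠ v) : Term.consistent (insert (v, b) t) := by
  rintro w ⟨h1, h2⟩
  rcases Finset.mem_insert.1 h1 with e1 | m1 <;> rcases Finset.mem_insert.1 h2 with e2 | m2
  · rw [Prod.mk.injEq] at e1 e2; simp [← e1.2] at e2
  · exact hf _ m2 (congrArg Prod.fst e1)
  · exact hf _ m1 (congrArg Prod.fst e2)
  · exact hc w ⟨m1, m2⟩

lemma condF_update (f : (V → Bool) → Bool) (v : V) (c c' : Bool) (y : V → Bool) :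
    condF f (v, c) (Function.update y v c') = condF f (v, c) y := by
  simp [condF, Function.update_idem]

/-- Prime implicants of a `v`-invariant function avoid `v`. -/
lemma prime_vfree {h : (V → Bool) → Bool} {t : Term V} {v : V}
    (hinv : ∀ y c, h (Function.update y v c) = h y)
    (hp : PrimeImplicant h t) : ∀ p ∈ t, p.1 ≠ v := by
  rintro ⟨w, c⟩ hmem rfl
  have hfree : ∀ p ∈ t.erase (w, c), p.1 ≠ w := by
    rintro ⟨u, d⟩ hm rfl
    have hd : (u, d) ≠ (u, c) := (Finset.mem_erase.1 hm).1
    have hmt : (u, d) ∈ t := (Finset.mem_erase.1 hm).2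
    cases c <;> cases d
    · exact hd rfl
    · exact hp.1.1 u ⟨hmt, hmem⟩
    · exact hp.1.1 u ⟨hmem, hmt⟩
    · exact hd rfl
  refine hp.2 _ (Finset.erase_ssubset hmem) ⟨consistent_subset (Finset.erase_subset _ _) hp.1.1, ?_⟩
  intro y hy
  rw [← hinv y c]
  refine hp.1.2 _ ?_
  intro p hp'
  by_cases e : p = (w, c)
  · subst e; simp
  · have hm : p ∈ t.erase (w, c) := Finset.mem_erase.2 ⟨e, hp'⟩
    rw [Function.update_of_ne (hfree p hm)]
    exact hy p hm

/-- For a `v`-free term, implying `f` is the same as implying both conditionals. -/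
lemma implies_iff_both {f : (V → Bool) → Bool} {t : Term V} {v : V} {b : Bool}
    (hf : ∀ p ∈ t, p.1 ≠ v) :
    (∀ y, Term.sat t y → f y = true) ↔
      (∀ y, Term.sat t y → condF f (v, b) y = true) ∧
      (∀ y, Term.sat t y → condF f (v, !b) y = true) := by
  constructor
  · intro h
    constructor <;> intro y hy <;>
      exact h _ ((sat_update hf y _).2 hy)
  · rintro ⟨h1, h2⟩ y hy
    have hall : ∀ c, f (Function.update y v c) = true := by
      intro c
      rcases Bool.eq_or_eq_not c b with rfl | rfl
      · exact h1 y hy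
      · exact h2 y hy
    have := hall (y v)
    rwa [Function.update_eq_self] at this

/-- Implying `f` for `insert (v,b) t` corresponds to implying `f | (v,b)` for `v`-free `t`. -/
lemma implies_insert_iff {f : (V → Bool) → Bool} {t : Term V} {v : V} {b : Bool}
    (hf : ∀ p ∈ t, p.1 ≠ v) :
    (∀ y, Term.sat (insert (v, b) t) y → f y = true) ↔
      (∀ y, Term.sat t y → condF f (v, b) y = true) := by
  constructor
  · intro h y hy
    refine h (Function.update y v b) ?_
    intro p hp
    rcases Finset.mem_insert.1 hp with rfl | hm
    · simp
    · rw [Function.update_of_ne (hf p hm)]; exact hy p hm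
  · intro h y hy
    have hvb : y v = b := hy (v, b) (Finset.mem_insert_self _ _)
    have ht : Term.sat t y := fun p hp => hy p (Finset.mem_insert_of_mem hp)
    have := h y ht
    unfold condF at this
    rwa [← hvb, Function.update_eq_self] at this
end Helpers

/-- Recursive characterization of the set of sufficient reasons: for a literal `ℓ`
satisfied by `x`, the sufficient reasons for `x` given `f` are those given
`(f | ℓ) ∧ (f | ℓ̄)`, together with the terms `ℓ ∧ t` where `t` is a sufficient reason
for `x` given `f | ℓ` that does not imply `f | ℓ̄`. -/
theorem stmt_5 {n : ℕ} (f : (Fin n → Bool) → Bool) (x : Fin n → Bool)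
    (l : Fin n × Bool) (hx : f x = true) (hl : x l.1 = l.2) :
    {t : Term (Fin n) | SuffReason f x t} =
      {t : Term (Fin n) |
        SuffReason (fun y => condF f l y && condF f (l.1, !l.2) y) x t} ∪
      {s : Term (Fin n) | ∃ t : Term (Fin n),
        SuffReason (condF f l) x t ∧
        ¬ (∀ y, Term.sat t y → condF f (l.1, !l.2) y = true) ∧
        s = insert l t} := by
  obtain ⟨v, b⟩ := l
  simp only [] at hl ⊢
  set g : (Fin n → Bool) → Bool := fun y => condF f (v, b) y && condF f (v, !b) y with hg
  have hginv : ∀ (y : Fin n → Bool) (c : Bool), g (Function.update y v c) = g y := by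
    intro y c
    simp only [hg, condF_update]
  have hcinv : ∀ (y : Fin n → Bool) (c : Bool),
      condF f (v, b) (Function.update y v c) = condF f (v, b) y := fun y c => condF_update ..
  ext t
  simp only [Set.mem_setOf_eq, Set.mem_union]
  constructor
  · rintro ⟨⟨⟨hcons, himp⟩, hprime⟩, hsat⟩
    have hnb : (v, !b) ∉ t := by
      intro hm
      have := hsat _ hm
      simp only [] at this
      rw [hl] at this
      exact (Bool.not_ne_self b).symm this
    by_cases hm : (v, b) ∈ t
    · -- right disjunct
      right
      set t' := t.erase (v, b) with ht'
      have htins : insert (v, b) t' = t := Finset.insert_erase hm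
      have hfree' : ∀ p ∈ t', p.1 ≠ v := by
        rintro ⟨w, c⟩ hmem rfl
        have h1 : (w, c) ≠ (w, b) := (Finset.mem_erase.1 hmem).1
        have h2 : (w, c) ∈ t := (Finset.mem_erase.1 hmem).2
        have hc : c = !b := by
          cases b <;> cases c <;> simp_all
        exact hnb (hc ▸ h2)
      have himp' : ∀ y, Term.sat t' y → condF f (v, b) y = true :=
        (implies_insert_iff hfree').1 (htins ▸ himp)
      refine ⟨t', ⟨⟨⟨consistent_subset (Finset.erase_subset _ _) hcons, himp'⟩, ?_⟩,
        fun p hp => hsat p (Finset.mem_erase.1 hp).2⟩, ?_, htins.symm⟩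
      · -- primality of t' for condF f (v,b)
        rintro s' hs' ⟨hsc, hsi⟩
        have hnotmem : (v, b) ∉ t' := Finset.notMem_erase _ _
        have hfs : ∀ p ∈ s', p.1 ≠ v := fun p hp => hfree' p (hs'.1 hp)
        obtain ⟨a, ha, hna⟩ := Finset.exists_of_ssubset hs'
        refine hprime (insert (v, b) s') ?_
          ⟨consistent_insert hsc hfs, (implies_insert_iff hfs).2 hsi⟩
        rw [← htins]
        refine (Finset.ssubset_iff_of_subset (Finset.insert_subset_insert _ hs'.1)).2
          ⟨a, Finset.mem_insert_of_mem ha, ?_⟩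
        intro hmem
        rcases Finset.mem_insert.1 hmem with rfl | h
        · exact hfree' _ ha rfl
        · exact hna h
      · -- t' does not imply condF f (v, !b)
        intro hcon
        exact hprime t' (Finset.erase_ssubset hm)
          ⟨consistent_subset (Finset.erase_subset _ _) hcons,
            (implies_iff_both hfree').2 ⟨himp', hcon⟩⟩
    · -- left disjunct
      left
      have hfree : ∀ p ∈ t, p.1 ≠ v := vfree_of_notmem (by cases b <;> simp_all) (by cases b <;> simp_all)
      have himpg : ∀ y, Term.sat t y → g y = true := by
        intro y hy
        have := (implies_iff_both (f := f) (b := b) hfree).1 himp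
        simp only [hg, this.1 y hy, this.2 y hy, Bool.and_self]
      refine ⟨⟨⟨hcons, himpg⟩, ?_⟩, hsat⟩
      rintro s hs ⟨hsc, hsi⟩
      have hfs : ∀ p ∈ s, p.1 ≠ v := fun p hp => hfree p (hs.1 hp)
      refine hprime s hs ⟨hsc, (implies_iff_both (f := f) (b := b) hfs).2 ⟨?_, ?_⟩⟩
      · intro y hy
        have := hsi y hy
        simp only [hg, Bool.and_eq_true] at this
        exact this.1
      · intro y hy
        have := hsi y hy
        simp only [hg, Bool.and_eq_true] at this
        exact this.2
  · rintro (⟨⟨⟨hcons, himp⟩, hprime⟩, hsat⟩ | ⟨t', ⟨⟨⟨hc', hi'⟩, hp'⟩, hs'⟩, hni, rfl⟩)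
    · -- from g
      have hfree : ∀ p ∈ t, p.1 ≠ v := prime_vfree hginv ⟨⟨hcons, himp⟩, hprime⟩
      have hboth : (∀ y, Term.sat t y → condF f (v, b) y = true) ∧
          (∀ y, Term.sat t y → condF f (v, !b) y = true) := by
        constructor <;> intro y hy <;> have := himp y hy <;>
          simp only [hg, Bool.and_eq_true] at this
        · exact this.1
        · exact this.2
      refine ⟨⟨⟨hcons, (implies_iff_both hfree).2 hboth⟩, ?_⟩, hsat⟩
      rintro s hs ⟨hsc, hsi⟩
      have hfs : ∀ p ∈ s, p.1 ≠ v := fun p hp => hfree p (hs.1 hp)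
      have := (implies_iff_both (f := f) (b := b) hfs).1 hsi
      refine hprime s hs ⟨hsc, fun y hy => ?_⟩
      simp only [hg, this.1 y hy, this.2 y hy, Bool.and_self]
    · -- from insert l t'
      have hfree' : ∀ p ∈ t', p.1 ≠ v := prime_vfree hcinv ⟨⟨hc', hi'⟩, hp'⟩
      have hnotmem : (v, b) ∉ t' := fun h => hfree' _ h rfl
      refine ⟨⟨⟨consistent_insert hc' hfree', (implies_insert_iff hfree').2 hi'⟩, ?_⟩, ?_⟩
      · rintro s hs ⟨hsc, hsi⟩
        by_cases hls : (v, b) ∈ s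
        · set s' := s.erase (v, b) with hs'e
          have hins : insert (v, b) s' = s := Finset.insert_erase hls
          have hsub : s' ⊆ t' := by
            intro p hp
            rcases Finset.mem_insert.1 (hs.1 (Finset.mem_erase.1 hp).2) with rfl | h
            · exact absurd rfl (Finset.mem_erase.1 hp).1
            · exact h
          have hss : s' ⊂ t' := by
            refine lt_of_le_of_ne hsub ?_
            intro he
            exact hs.2 (by rw [← hins, he])
          have hfs : ∀ p ∈ s', p.1 ≠ v := fun p hp => hfree' p (hsub hp)
          exact hp' s' hss ⟨consistent_subset (Finset.erase_subset _ _) hsc,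
            (implies_insert_iff hfs).1 (hins ▸ hsi)⟩
        · have hsub : s ⊆ t' := by
            intro p hp
            rcases Finset.mem_insert.1 (hs.1 hp) with rfl | h
            · exact absurd hp hls
            · exact h
          have hfs : ∀ p ∈ s, p.1 ≠ v := fun p hp => hfree' p (hsub hp)
          have hboth := (implies_iff_both (f := f) (b := b) hfs).1 hsi
          rcases lt_or_eq_of_le hsub with hss | rfl
          · exact hp' s hss ⟨hsc, hboth.1⟩
          · exact hni hboth.2
      · intro p hp
        rcases Finset.mem_insert.1 hp with rfl | h
        · exact hl
        · exact hs' p h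
end

section
/- Let f ∈ F_n and x an instance, and let ℓ be a literal satisfied by x with variable in Var(f). Then the set of sufficient reasons for x given (f | ℓ) ∧ (f | ℓ̄) equals the maximal elements under implication of the set {t_ℓ ∧ t_ℓ̄ : t_ℓ a sufficient reason for x given f | ℓ, t_ℓ̄ a sufficient reason for x given f | ℓ̄}. -/
/-- The set of conjunctions of a sufficient reason for `x` given `f | ℓ` with a
sufficient reason for `x` given `f | ℓ̄`. -/
def prodSet {V : Type*} [DecidableEq V] (f : (V → Bool) → Bool) (x : V → Bool)
    (l : V × Bool) : Set (Term V) :=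
  {s : Term V | ∃ t₁ t₂ : Term V,
    SuffReason (condF f l) x t₁ ∧ SuffReason (condF f (l.1, !l.2)) x t₂ ∧ s = t₁ ∪ t₂}

/-- Satisfaction is antitone in the term. -/
lemma Term.sat_mono {V : Type*} {s t : Term V} (h : s ⊆ t) {y : V → Bool}
    (ht : Term.sat t y) : Term.sat s y := fun p hp => ht p (h hp)

/-- Consistency is inherited by subterms. -/
lemma Term.consistent_mono {V : Type*} {s t : Term V} (h : s ⊆ t)
    (ht : Term.consistent t) : Term.consistent s :=
  fun v hv => ht v ⟨h hv.1, h hv.2⟩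

/-- A term satisfied by some assignment is consistent. -/
lemma Term.consistent_of_sat {V : Type*} {t : Term V} {y : V → Bool}
    (h : Term.sat t y) : Term.consistent t := by
  intro v hv
  have h1 := h _ hv.1
  have h2 := h _ hv.2
  simp_all

/-- Any implicant contains a prime implicant. -/
lemma exists_prime_subset {V : Type*} (f : (V → Bool) → Bool) :
    ∀ t : Term V, Implicant f t → ∃ s, s ⊆ t ∧ PrimeImplicant f s := by
  intro t
  induction t using Finset.strongInductionOn with
  | _ t ih =>
    intro ht
    by_cases h : ∃ s ⊂ t, Implicant f s
    · obtain ⟨s, hst, hs⟩ := h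
      obtain ⟨u, hus, hu⟩ := ih s hst hs
      exact ⟨u, hus.trans hst.subset, hu⟩
    · push_neg at h
      exact ⟨t, subset_rfl, ht, h⟩

/-- The sufficient reasons for `x` given `(f | ℓ) ∧ (f | ℓ̄)` are exactly the maximal
elements under implication (i.e., the minimal elements under inclusion, viewing terms
as sets of literals) of the set of conjunctions `t_ℓ ∧ t_ℓ̄` of sufficient reasons for
`x` given `f | ℓ` and given `f | ℓ̄`, respectively. -/
theorem stmt_6 {n : ℕ} (f : (Fin n → Bool) → Bool) (x : Fin n → Bool)
    (l : Fin n × Bool) (hl : x l.1 = l.2)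
    (hvar : ∃ y, f (Function.update y l.1 true) ≠ f (Function.update y l.1 false)) :
    {t : Term (Fin n) |
        SuffReason (fun y => condF f l y && condF f (l.1, !l.2) y) x t} =
      {t : Term (Fin n) | t ∈ prodSet f x l ∧ ∀ t' ∈ prodSet f x l, ¬ t' ⊂ t} := by
  ext t
  simp only [Set.mem_setOf_eq]
  constructor
  · rintro ⟨⟨⟨hcons, himp⟩, hprime⟩, hsat⟩
    -- t is an implicant of both conditionings
    have himp1 : Implicant (condF f l) t :=
      ⟨hcons, fun y hy => (Bool.and_eq_true _ _ |>.mp (himp y hy)).1⟩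
    have himp2 : Implicant (condF f (l.1, !l.2)) t :=
      ⟨hcons, fun y hy => (Bool.and_eq_true _ _ |>.mp (himp y hy)).2⟩
    obtain ⟨t₁, ht₁sub, ht₁⟩ := exists_prime_subset _ t himp1
    obtain ⟨t₂, ht₂sub, ht₂⟩ := exists_prime_subset _ t himp2
    have hunion_sub : t₁ ∪ t₂ ⊆ t := Finset.union_subset ht₁sub ht₂sub
    have hunion_imp : Implicant (fun y => condF f l y && condF f (l.1, !l.2) y) (t₁ ∪ t₂) :=
      ⟨Term.consistent_mono hunion_sub hcons, fun y hy => by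
        rw [Bool.and_eq_true]
        exact ⟨ht₁.1.2 y (Term.sat_mono Finset.subset_union_left hy),
               ht₂.1.2 y (Term.sat_mono Finset.subset_union_right hy)⟩⟩
    have heq : t₁ ∪ t₂ = t := by
      by_contra hne
      exact hprime (t₁ ∪ t₂) (hunion_sub.ssubset_of_ne hne) hunion_imp
    constructor
    · exact ⟨t₁, t₂, ⟨ht₁, Term.sat_mono ht₁sub hsat⟩,
        ⟨ht₂, Term.sat_mono ht₂sub hsat⟩, heq.symm⟩
    · rintro t' ⟨s₁, s₂, hs₁, hs₂, rfl⟩ hsub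
      refine hprime _ hsub ⟨Term.consistent_mono hsub.subset hcons, fun y hy => ?_⟩
      rw [Bool.and_eq_true]
      exact ⟨hs₁.1.1.2 y (Term.sat_mono Finset.subset_union_left hy),
             hs₂.1.1.2 y (Term.sat_mono Finset.subset_union_right hy)⟩
  · rintro ⟨⟨t₁, t₂, ⟨p₁, s₁x⟩, ⟨p₂, s₂x⟩, rfl⟩, hmin⟩
    have hsatx : Term.sat (t₁ ∪ t₂) x := by
      intro p hp
      rcases Finset.mem_union.mp hp with h | h
      · exact s₁x p h
      · exact s₂x p h
    have hcons := Term.consistent_of_sat hsatx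
    refine ⟨⟨⟨hcons, fun y hy => ?_⟩, ?_⟩, hsatx⟩
    · rw [Bool.and_eq_true]
      exact ⟨p₁.1.2 y (Term.sat_mono Finset.subset_union_left hy),
             p₂.1.2 y (Term.sat_mono Finset.subset_union_right hy)⟩
    · rintro s hs ⟨scons, simp'⟩
      have hs1 : Implicant (condF f l) s :=
        ⟨scons, fun y hy => (Bool.and_eq_true _ _ |>.mp (simp' y hy)).1⟩
      have hs2 : Implicant (condF f (l.1, !l.2)) s :=
        ⟨scons, fun y hy => (Bool.and_eq_true _ _ |>.mp (simp' y hy)).2⟩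
      obtain ⟨u₁, hu₁sub, hu₁⟩ := exists_prime_subset _ s hs1
      obtain ⟨u₂, hu₂sub, hu₂⟩ := exists_prime_subset _ s hs2
      have hsx : Term.sat s x := Term.sat_mono hs.subset hsatx
      refine hmin (u₁ ∪ u₂) ⟨u₁, u₂, ⟨hu₁, Term.sat_mono hu₁sub hsx⟩,
        ⟨hu₂, Term.sat_mono hu₂sub hsx⟩, rfl⟩ ?_
      exact lt_of_le_of_lt (Finset.union_subset hu₁sub hu₂sub) hs
end

section
/- For every odd n ∈ ℕ (n ≥ 1), there exists a Boolean function f : {0,1}^n → {0,1} representable by a decision tree of depth (n+1)/2 with 2n+1 nodes, and an instance x ∈ {0,1}^n, such that the number of minimal sufficient reasons for x given f is 2^((n-1)/2). -/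
/-- Boolean decision trees over `n` variables. -/
inductive DTree (n : ℕ) where
  | leaf : Bool → DTree n
  | node : Fin n → DTree n → DTree n → DTree n

/-- Evaluation of a decision tree: go left on 0, right on 1. -/
def DTree.eval {n : ℕ} : DTree n → (Fin n → Bool) → Bool
  | .leaf b, _ => b
  | .node i l r, x => if x i then r.eval x else l.eval x

/-- Number of nodes of a decision tree. -/
def DTree.size {n : ℕ} : DTree n → ℕ
  | .leaf _ => 1
  | .node _ l r => 1 + l.size + r.size

/-- Depth of a decision tree. -/
def DTree.depth {n : ℕ} : DTree n → ℕ
  | .leaf _ => 0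
  | .node _ l r => 1 + max l.depth r.depth

/-- Auxiliary: no variable in `s` appears, and recursively on children. -/
def DTree.readOnceAux {n : ℕ} : DTree n → Finset (Fin n) → Prop
  | .leaf _, _ => True
  | .node i l r, s =>
      i ∉ s ∧ l.readOnceAux (insert i s) ∧ r.readOnceAux (insert i s)

/-- Read-once property: every variable appears at most once on any root-to-leaf path. -/
def DTree.readOnce {n : ℕ} (T : DTree n) : Prop := T.readOnceAux ∅

/-- A minimal sufficient reason: a sufficient reason of minimum cardinality. -/
def MinSuffReason {V : Type*} (f : (V → Bool) → Bool) (x : V → Bool) (t : Term V) : Prop :=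
  SuffReason f x t ∧ ∀ s : Term V, SuffReason f x s → t.card ≤ s.card


namespace Stmt8Aux

def sV (m : ℕ) (i : Fin m) : Fin (2*m+1) := ⟨2*i.val, by omega⟩
def pV (m : ℕ) (i : Fin m) : Fin (2*m+1) := ⟨2*i.val+1, by have := i.isLt; omega⟩
def zV (m : ℕ) : Fin (2*m+1) := ⟨2*m, by omega⟩

def mkT (m : ℕ) (i : ℕ) : DTree (2*m+1) :=
  if h : i < m then
    .node ⟨2*i, by omega⟩ (mkT m (i+1))
      (.node ⟨2*i+1, by omega⟩ (.leaf false) (.leaf true))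
  else
    .node ⟨2*m, by omega⟩ (.leaf false) (.leaf true)
termination_by m - i

theorem depth_mkT (m i : ℕ) (h : i ≤ m) : (mkT m i).depth = m - i + 1 := by
  rw [mkT]
  by_cases h' : i < m
  · rw [dif_pos h']
    have ih := depth_mkT m (i+1) h'
    simp only [DTree.depth, ih]
    omega
  · rw [dif_neg h']
    simp only [DTree.depth]
    omega
termination_by m - i

theorem size_mkT (m i : ℕ) (h : i ≤ m) : (mkT m i).size = 4*(m-i)+3 := by
  rw [mkT]
  by_cases h' : i < m
  · rw [dif_pos h']
    have ih := size_mkT m (i+1) h'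
    simp only [DTree.size, ih]
    omega
  · rw [dif_neg h']
    simp only [DTree.size]
    omega
termination_by m - i

theorem ro_mkT (m i : ℕ) (h : i ≤ m) (S : Finset (Fin (2*m+1)))
    (hS : ∀ v ∈ S, v.val < 2*i) : (mkT m i).readOnceAux S := by
  rw [mkT]
  by_cases h' : i < m
  · rw [dif_pos h']
    refine ⟨fun hc => by have := hS _ hc; simp only at this; omega, ?_, ?_⟩
    · exact ro_mkT m (i+1) h' _ (fun v hv => by
        rcases Finset.mem_insert.1 hv with h1 | h1
        · subst h1; simp only; omega
        · have := hS _ h1; omega)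
    · refine ⟨?_, trivial, trivial⟩
      intro hc
      rcases Finset.mem_insert.1 hc with h1 | h1
      · have := congrArg Fin.val h1; simp only at this; omega
      · have := hS _ h1; simp only at this; omega
  · rw [dif_neg h']
    refine ⟨fun hc => ?_, trivial, trivial⟩
    have := hS _ hc; simp only at this; omega
termination_by m - i

theorem eval_true (m i : ℕ) (h : i ≤ m) (y : Fin (2*m+1) → Bool)
    (hz : y (zV m) = true)
    (hp : ∀ j : Fin m, i ≤ j.val → y (sV m j) = true → y (pV m j) = true) :
    (mkT m i).eval y = true := by
  rw [mkT]
  by_cases h' : i < m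
  · rw [dif_pos h']
    simp only [DTree.eval]
    by_cases hs : y ⟨2*i, by omega⟩ = true
    · rw [if_pos hs]
      have := hp ⟨i, h'⟩ le_rfl hs
      simp only [pV] at this
      rw [if_pos this]
    · rw [if_neg hs]
      exact eval_true m (i+1) h' y hz (fun j hj hsj => hp j (by omega) hsj)
  · rw [dif_neg h']
    simp only [DTree.eval]
    have hi : i = m := by omega
    simp only [zV] at hz
    rw [if_pos hz]
termination_by m - i

theorem eval_false_at (m i : ℕ) (j : Fin m) (hij : i ≤ j.val)
    (y : Fin (2*m+1) → Bool)
    (hsj : y (sV m j) = true) (hpj : y (pV m j) = false)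
    (hbefore : ∀ j' : Fin m, i ≤ j'.val → j'.val < j.val → y (sV m j') = false) :
    (mkT m i).eval y = false := by
  have h' : i < m := lt_of_le_of_lt hij j.isLt
  rw [mkT, dif_pos h']
  simp only [DTree.eval]
  by_cases hs : y ⟨2*i, by omega⟩ = true
  · have hieq : i = j.val := by
      by_contra hne
      have hlt : i < j.val := by omega
      have := hbefore ⟨i, h'⟩ le_rfl hlt
      simp only [sV] at this
      rw [this] at hs
      exact Bool.false_ne_true hs
    rw [if_pos hs]
    have : (⟨2*i+1, by omega⟩ : Fin (2*m+1)) = pV m j := by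
      simp only [pV]; exact Fin.ext (by simp only; omega)
    rw [this, hpj, if_neg (by simp)]
  · rw [if_neg hs]
    have hine : i ≠ j.val := by
      intro hc
      have : (⟨2*i, by omega⟩ : Fin (2*m+1)) = sV m j := by
        simp only [sV]; exact Fin.ext (by simp only; omega)
      rw [this, hsj] at hs; exact hs rfl
    exact eval_false_at m (i+1) j (by omega) y hsj hpj
      (fun j' hj' hlt => hbefore j' (by omega) hlt)
termination_by m - i

theorem eval_false_z (m i : ℕ) (h : i ≤ m) (y : Fin (2*m+1) → Bool)
    (hz : y (zV m) = false) (hs : ∀ j : Fin m, i ≤ j.val → y (sV m j) = false) :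
    (mkT m i).eval y = false := by
  rw [mkT]
  by_cases h' : i < m
  · rw [dif_pos h']
    simp only [DTree.eval]
    have := hs ⟨i, h'⟩ le_rfl
    simp only [sV] at this
    rw [this, if_neg (by simp)]
    exact eval_false_z m (i+1) h' y hz (fun j hj => hs j (by omega))
  · rw [dif_neg h']
    simp only [DTree.eval, zV] at hz ⊢
    rw [hz, if_neg (by simp)]
termination_by m - i

/-- The instance: selectors false, payloads and z true. -/
def xA (m : ℕ) : Fin (2*m+1) → Bool :=
  fun v => if v.val % 2 = 0 ∧ v.val < 2*m then false else true

theorem xA_s (m : ℕ) (i : Fin m) : xA m (sV m i) = false := by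
  have := i.isLt
  exact if_pos ⟨by simp only [sV]; omega, by simp only [sV]; omega⟩

theorem xA_p (m : ℕ) (i : Fin m) : xA m (pV m i) = true := by
  refine if_neg ?_
  simp only [pV, not_and]
  intro hc; omega

theorem xA_z (m : ℕ) : xA m (zV m) = true := by
  refine if_neg ?_
  simp only [zV, not_and]
  intro _; omega

def lit (m : ℕ) (c : Fin m → Bool) (i : Fin m) : Fin (2*m+1) × Bool :=
  if c i then (pV m i, true) else (sV m i, false)

theorem lit_val (m : ℕ) (c : Fin m → Bool) (i : Fin m) :
    (lit m c i).1.val = 2*i.val ∨ (lit m c i).1.val = 2*i.val+1 := by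
  by_cases h : c i <;> simp [lit, h, pV, sV]

theorem lit_val_lt (m : ℕ) (c : Fin m → Bool) (i : Fin m) :
    (lit m c i).1.val < 2*m := by
  have := i.isLt
  rcases lit_val m c i with h | h <;> omega

theorem lit_inj (m : ℕ) (c : Fin m → Bool) : Function.Injective (lit m c) := by
  intro i j hij
  have h1 := lit_val m c i
  have h2 := lit_val m c j
  rw [hij] at h1
  exact Fin.ext (by omega)

def Tc (m : ℕ) (c : Fin m → Bool) : Term (Fin (2*m+1)) :=
  insert (zV m, true) (Finset.image (lit m c) Finset.univ)

theorem zlit_not_mem_image (m : ℕ) (c : Fin m → Bool) :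
    (zV m, true) ∉ Finset.image (lit m c) Finset.univ := by
  intro hc
  obtain ⟨i, -, hi⟩ := Finset.mem_image.1 hc
  have := lit_val_lt m c i
  rw [hi] at this
  simp only [zV] at this; omega

theorem card_Tc (m : ℕ) (c : Fin m → Bool) : (Tc m c).card = m + 1 := by
  rw [Tc, Finset.card_insert_of_notMem (zlit_not_mem_image m c),
    Finset.card_image_of_injective _ (lit_inj m c), Finset.card_univ,
    Fintype.card_fin]

theorem mem_Tc (m : ℕ) (c : Fin m → Bool) (a : Fin (2*m+1) × Bool) :
    a ∈ Tc m c ↔ a = (zV m, true) ∨ ∃ i, a = lit m c i := by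
  simp only [Tc, Finset.mem_insert, Finset.mem_image, Finset.mem_univ,
    true_and]
  constructor
  · rintro (h | ⟨i, hi⟩)
    · exact Or.inl h
    · exact Or.inr ⟨i, hi.symm⟩
  · rintro (h | ⟨i, hi⟩)
    · exact Or.inl h
    · exact Or.inr ⟨i, hi.symm⟩

theorem sat_Tc_xA (m : ℕ) (c : Fin m → Bool) : Term.sat (Tc m c) (xA m) := by
  intro a ha
  rcases (mem_Tc m c a).1 ha with h | ⟨i, h⟩
  · subst h; exact xA_z m
  · subst h
    by_cases hci : c i <;> simp only [lit, hci, if_pos, if_neg, Bool.false_eq_true,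
      if_false, if_true]
    · exact xA_p m i
    · exact xA_s m i

theorem consistent_Tc (m : ℕ) (c : Fin m → Bool) : Term.consistent (Tc m c) := by
  intro v ⟨ht, hf⟩
  rcases (mem_Tc m c _).1 ht with h1 | ⟨i, h1⟩ <;>
    rcases (mem_Tc m c _).1 hf with h2 | ⟨j, h2⟩
  · have := congrArg Prod.snd h1
    have := congrArg Prod.snd h2
    simp_all
  · have hv1 : v = zV m := congrArg Prod.fst h1
    have hv2 : v = (lit m c j).1 := congrArg Prod.fst h2
    have := lit_val_lt m c j
    rw [← hv2, hv1] at this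
    simp only [zV] at this; omega
  · have hv1 : v = zV m := congrArg Prod.fst h2
    have hv2 : v = (lit m c i).1 := congrArg Prod.fst h1
    have := lit_val_lt m c i
    rw [← hv2, hv1] at this
    simp only [zV] at this; omega
  · have hv1 : v = (lit m c i).1 := congrArg Prod.fst h1
    have hv2 : v = (lit m c j).1 := congrArg Prod.fst h2
    have hij : i = j := by
      have h1' := lit_val m c i
      have h2' := lit_val m c j
      rw [← hv1] at h1'; rw [← hv2] at h2'
      exact Fin.ext (by omega)
    subst hij
    have e1 := congrArg Prod.snd h1
    have e2 := congrArg Prod.snd h2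
    by_cases hci : c i <;> simp [lit, hci] at e1 e2 <;> simp_all

theorem Tc_implicant (m : ℕ) (c : Fin m → Bool) :
    Implicant (mkT m 0).eval (Tc m c) := by
  refine ⟨consistent_Tc m c, fun y hy => ?_⟩
  have hz : y (zV m) = true := hy (zV m, true) (by rw [mem_Tc]; exact Or.inl rfl)
  refine eval_true m 0 (by omega) y hz (fun j _ hsj => ?_)
  by_cases hcj : c j
  · exact hy (pV m j, true) (by rw [mem_Tc]; exact Or.inr ⟨j, by simp [lit, hcj]⟩)
  · have : y (sV m j) = false :=
      hy (sV m j, false) (by rw [mem_Tc]; exact Or.inr ⟨j, by simp [lit, hcj]⟩)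
    rw [this] at hsj; exact absurd hsj (by simp)

/-- Distinctness of the variables, val-level. -/
theorem sV_ne_zV (m : ℕ) (i : Fin m) : sV m i ≠ zV m := by
  have := i.isLt
  intro hc; have := congrArg Fin.val hc; simp only [sV, zV] at this; omega

theorem pV_ne_zV (m : ℕ) (i : Fin m) : pV m i ≠ zV m := by
  have := i.isLt
  intro hc; have := congrArg Fin.val hc; simp only [pV, zV] at this; omega

theorem sV_ne_pV (m : ℕ) (i j : Fin m) : sV m i ≠ pV m j := by
  intro hc; have := congrArg Fin.val hc; simp only [sV, pV] at this; omega

theorem sV_inj (m : ℕ) {i j : Fin m} (h : sV m i = sV m j) : i = j := by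
  have := congrArg Fin.val h; simp only [sV] at this; exact Fin.ext (by omega)

/-- Structure of any implicant covering xA. -/
theorem sr_contains (m : ℕ) (t : Term (Fin (2*m+1)))
    (himp : Implicant (mkT m 0).eval t) (hsat : Term.sat t (xA m)) :
    (zV m, true) ∈ t ∧ ∀ i : Fin m, (sV m i, false) ∈ t ∨ (pV m i, true) ∈ t := by
  constructor
  · by_contra hz
    set y := Function.update (xA m) (zV m) false with hy
    have hsaty : Term.sat t y := by
      intro a ha
      have hne : a.1 ≠ zV m := by
        intro hc
        have h2 := hsat a ha
        rw [hc, xA_z] at h2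
        apply hz
        have : a = (zV m, true) := Prod.ext hc h2.symm
        rwa [← this]
      rw [hy, Function.update_of_ne hne]
      exact hsat a ha
    have := himp.2 y hsaty
    rw [eval_false_z m 0 (by omega) y (by rw [hy, Function.update_self])
      (fun j _ => by rw [hy, Function.update_of_ne (sV_ne_zV m j)]; exact xA_s m j)] at this
    exact absurd this (by simp)
  · intro i
    by_contra hc
    push_neg at hc
    obtain ⟨hns, hnp⟩ := hc
    set y := Function.update (Function.update (xA m) (sV m i) true) (pV m i) false with hy
    have hsaty : Term.sat t y := by
      intro a ha
      have hne1 : a.1 ≠ sV m i := by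
        intro hcc
        have h2 := hsat a ha
        rw [hcc, xA_s] at h2
        exact hns (by have : a = (sV m i, false) := Prod.ext hcc h2.symm; rwa [← this])
      have hne2 : a.1 ≠ pV m i := by
        intro hcc
        have h2 := hsat a ha
        rw [hcc, xA_p] at h2
        exact hnp (by have : a = (pV m i, true) := Prod.ext hcc h2.symm; rwa [← this])
      rw [hy, Function.update_of_ne hne2, Function.update_of_ne hne1]
      exact hsat a ha
    have := himp.2 y hsaty
    rw [eval_false_at m 0 i (by omega) y
      (by rw [hy, Function.update_of_ne (sV_ne_pV m i i), Function.update_self])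
      (by rw [hy, Function.update_self])
      (fun j' _ hlt => by
        have hne1 : sV m j' ≠ pV m i := sV_ne_pV m j' i
        have hne2 : sV m j' ≠ sV m i := fun hcc => by
          have := sV_inj m hcc; omega
        rw [hy, Function.update_of_ne hne1, Function.update_of_ne hne2]
        exact xA_s m j')] at this
    exact absurd this (by simp)

theorem sr_card (m : ℕ) (t : Term (Fin (2*m+1)))
    (himp : Implicant (mkT m 0).eval t) (hsat : Term.sat t (xA m)) :
    m + 1 ≤ t.card := by
  obtain ⟨hz, hlev⟩ := sr_contains m t himp hsat
  set g : Fin (m+1) → Fin (2*m+1) × Bool := fun i =>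
    if h : i.val < m then
      (if (sV m ⟨i.val, h⟩, false) ∈ t then (sV m ⟨i.val, h⟩, false)
       else (pV m ⟨i.val, h⟩, true))
    else (zV m, true) with hg
  have hmem : ∀ i, g i ∈ t := by
    intro i
    simp only [hg]
    by_cases h : i.val < m
    · rw [dif_pos h]
      by_cases h2 : (sV m ⟨i.val, h⟩, false) ∈ t
      · rwa [if_pos h2]
      · rw [if_neg h2]
        rcases hlev ⟨i.val, h⟩ with hh | hh
        · exact absurd hh h2
        · exact hh
    · rw [dif_neg h]; exact hz
  have hval : ∀ i : Fin (m+1), (g i).1.val = 2*i.val ∨ (g i).1.val = 2*i.val+1 := by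
    intro i
    simp only [hg]
    by_cases h : i.val < m
    · rw [dif_pos h]
      by_cases h2 : (sV m ⟨i.val, h⟩, false) ∈ t
      · rw [if_pos h2]; left; rfl
      · rw [if_neg h2]; right; rfl
    · rw [dif_neg h]
      left
      have : i.val = m := by have := i.isLt; omega
      simp [zV, this]
  have hinj : Function.Injective g := by
    intro i j hij
    have h1 := hval i
    have h2 := hval j
    rw [hij] at h1
    exact Fin.ext (by omega)
  calc m + 1 = (Finset.univ.image g).card := by
        rw [Finset.card_image_of_injective _ hinj, Finset.card_univ, Fintype.card_fin]
    _ ≤ t.card := Finset.card_le_card (fun a ha => by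
        obtain ⟨i, -, hi⟩ := Finset.mem_image.1 ha
        rw [← hi]; exact hmem i)

theorem Tc_subset (m : ℕ) (t : Term (Fin (2*m+1)))
    (himp : Implicant (mkT m 0).eval t) (hsat : Term.sat t (xA m)) :
    Tc m (fun i => decide ((pV m i, true) ∈ t)) ⊆ t := by
  obtain ⟨hz, hlev⟩ := sr_contains m t himp hsat
  intro a ha
  rcases (mem_Tc m _ a).1 ha with h | ⟨i, h⟩
  · subst h; exact hz
  · subst h
    by_cases hp : (pV m i, true) ∈ t
    · simp [lit, hp]
    · simp only [lit, hp, decide_false, Bool.false_eq_true, if_false]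
      rcases hlev i with hh | hh
      · exact hh
      · exact absurd hh hp

theorem sr_eq_of_card (m : ℕ) (t : Term (Fin (2*m+1)))
    (himp : Implicant (mkT m 0).eval t) (hsat : Term.sat t (xA m))
    (hc : t.card = m + 1) : ∃ c, t = Tc m c := by
  refine ⟨fun i => decide ((pV m i, true) ∈ t), ?_⟩
  have h1 := Tc_subset m t himp hsat
  have h2 : t.card ≤ (Tc m (fun i => decide ((pV m i, true) ∈ t))).card := by
    rw [card_Tc, hc]
  exact (Finset.eq_of_subset_of_card_le h1 h2).symm

theorem Tc_prime (m : ℕ) (c : Fin m → Bool) :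
    PrimeImplicant (mkT m 0).eval (Tc m c) := by
  refine ⟨Tc_implicant m c, fun s hs himps => ?_⟩
  have hsub : s ⊆ Tc m c := hs.subset
  obtain ⟨a, hat, hans⟩ := Finset.exists_of_ssubset hs
  rcases (mem_Tc m c a).1 hat with h | ⟨i, h⟩
  · -- missing literal is (z, true)
    subst h
    set y := Function.update (xA m) (zV m) false with hy
    have hsaty : Term.sat s y := by
      intro b hb
      rcases (mem_Tc m c b).1 (hsub hb) with hbz | ⟨j, hbj⟩
      · exact absurd (hbz ▸ hb) hans
      · subst hbj
        have hne : (lit m c j).1 ≠ zV m := by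
          intro hcc
          have := lit_val_lt m c j
          rw [hcc] at this; simp only [zV] at this; omega
        rw [hy, Function.update_of_ne hne]
        exact sat_Tc_xA m c _ ((mem_Tc m c _).2 (Or.inr ⟨j, rfl⟩))
    have := himps.2 y hsaty
    rw [eval_false_z m 0 (by omega) y (by rw [hy, Function.update_self])
      (fun j _ => by rw [hy, Function.update_of_ne (sV_ne_zV m j)]; exact xA_s m j)] at this
    exact absurd this (by simp)
  · -- missing literal is lit i
    subst h
    set y := Function.update (Function.update (xA m) (sV m i) true) (pV m i) false with hy
    have hsaty : Term.sat s y := by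
      intro b hb
      rcases (mem_Tc m c b).1 (hsub hb) with hbz | ⟨j, hbj⟩
      · subst hbz
        rw [hy]
        simp only [Function.update_of_ne ((pV_ne_zV m i).symm : zV m ≠ pV m i),
          Function.update_of_ne ((sV_ne_zV m i).symm : zV m ≠ sV m i)]
        exact xA_z m
      · subst hbj
        have hji : j ≠ i := fun hcc => hans (hcc ▸ hb)
        have hne1 : (lit m c j).1 ≠ pV m i := by
          intro hcc
          rcases lit_val m c j with hh | hh <;>
            · have := congrArg Fin.val hcc; simp only [pV] at this; omega
        have hne2 : (lit m c j).1 ≠ sV m i := by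
          intro hcc
          have hv := congrArg Fin.val hcc
          simp only [sV] at hv
          rcases lit_val m c j with hh | hh
          · exact hji (Fin.ext (by omega))
          · omega
        rw [hy, Function.update_of_ne hne1, Function.update_of_ne hne2]
        exact sat_Tc_xA m c _ ((mem_Tc m c _).2 (Or.inr ⟨j, rfl⟩))
    have := himps.2 y hsaty
    rw [eval_false_at m 0 i (by omega) y
      (by rw [hy, Function.update_of_ne (sV_ne_pV m i i), Function.update_self])
      (by rw [hy, Function.update_self])
      (fun j' _ hlt => by
        have hne2 : sV m j' ≠ sV m i := fun hcc => by
          have := sV_inj m hcc; omega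
        rw [hy, Function.update_of_ne (sV_ne_pV m j' i), Function.update_of_ne hne2]
        exact xA_s m j')] at this
    exact absurd this (by simp)

theorem Tc_minSR (m : ℕ) (c : Fin m → Bool) :
    MinSuffReason (mkT m 0).eval (xA m) (Tc m c) := by
  refine ⟨⟨Tc_prime m c, sat_Tc_xA m c⟩, fun s hs => ?_⟩
  rw [card_Tc]
  exact sr_card m s hs.1.1 hs.2

theorem minSR_iff (m : ℕ) (t : Term (Fin (2*m+1))) :
    MinSuffReason (mkT m 0).eval (xA m) t ↔ ∃ c, t = Tc m c := by
  constructor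
  · rintro ⟨⟨⟨himp, -⟩, hsat⟩, hmin⟩
    have h1 : m + 1 ≤ t.card := sr_card m t himp hsat
    have h2 : t.card ≤ m + 1 := by
      have := hmin (Tc m (fun _ => false)) (Tc_minSR m (fun _ => false)).1
      rwa [card_Tc] at this
    exact sr_eq_of_card m t himp hsat (by omega)
  · rintro ⟨c, rfl⟩
    exact Tc_minSR m c

theorem pV_mem_Tc_iff (m : ℕ) (c : Fin m → Bool) (i : Fin m) :
    (pV m i, true) ∈ Tc m c ↔ c i = true := by
  constructor
  · intro h
    rcases (mem_Tc m c _).1 h with hh | ⟨j, hh⟩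
    · have := congrArg (fun q => q.1.val) hh
      have hlt := i.isLt
      simp only [pV, zV] at this; omega
    · have hv := congrArg (fun q => q.1.val) hh
      have hji : j = i := by
        rcases lit_val m c j with h1 | h1 <;>
          · simp only [pV] at hv
            exact Fin.ext (by omega)
      subst hji
      by_cases hcj : c j
      · exact hcj
      · simp only [lit, hcj, Bool.false_eq_true, if_false] at hh
        have := congrArg (fun q => q.1.val) hh
        simp only [pV, sV] at this; omega
  · intro h
    exact (mem_Tc m c _).2 (Or.inr ⟨i, by simp [lit, h]⟩)

theorem Tc_inj (m : ℕ) : Function.Injective (Tc m) := by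
  intro c c' h
  funext i
  have := pV_mem_Tc_iff m c i
  rw [h, pV_mem_Tc_iff] at this
  by_cases h1 : c i <;> by_cases h2 : c' i <;> simp_all

theorem count_minSR (m : ℕ) :
    {t : Term (Fin (2*m+1)) | MinSuffReason (mkT m 0).eval (xA m) t}.ncard = 2 ^ m := by
  have hset : {t : Term (Fin (2*m+1)) | MinSuffReason (mkT m 0).eval (xA m) t}
      = Set.range (Tc m) := by
    ext t
    simp only [Set.mem_setOf_eq, Set.mem_range, minSR_iff]
    constructor
    · rintro ⟨c, rfl⟩; exact ⟨c, rfl⟩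
    · rintro ⟨c, rfl⟩; exact ⟨c, rfl⟩
  rw [hset, ← Nat.card_coe_set_eq, Nat.card_range_of_injective (Tc_inj m)]
  simp [Nat.card_eq_fintype_card]

end Stmt8Aux

/-- For every odd `n ≥ 1` there is a (read-once) decision tree on `n` variables of depth
`(n+1)/2` with `2n+1` nodes and an instance `x` such that the number of minimal
sufficient reasons for `x` given the tree is `2^((n-1)/2)`. -/
theorem stmt_8 (n : ℕ) (hodd : Odd n) (hn : 1 ≤ n) :
    ∃ (T : DTree n) (x : Fin n → Bool),
      T.readOnce ∧ T.depth = (n + 1) / 2 ∧ T.size = 2 * n + 1 ∧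
      {t : Term (Fin n) | MinSuffReason T.eval x t}.ncard = 2 ^ ((n - 1) / 2) := by
  obtain ⟨m, rfl⟩ := hodd
  refine ⟨Stmt8Aux.mkT m 0, Stmt8Aux.xA m,
    Stmt8Aux.ro_mkT m 0 (by omega) ∅ (by simp), ?_, ?_, ?_⟩
  · rw [Stmt8Aux.depth_mkT m 0 (by omega)]; omega
  · rw [Stmt8Aux.size_mkT m 0 (by omega)]; omega
  · have h : (2 * m + 1 - 1) / 2 = m := by omega
    rw [h]
    exact Stmt8Aux.count_minSR m
end

section
/- Consider the Boolean function f_k on 2k-1 variables defined recursively by f_1 = x_1 and f_{k+1} = (¬x_{2k} ∧ x_{2k+1}) ∨ (x_{2k} ∧ f_k') where f_k' is f_k on fresh variables (i.e., the 'caterpillar' decision tree of depth k). For the all-ones instance x, the number of minimal sufficient reasons for x given f_k is 2^(k-1), and each minimal sufficient reason contains exactly k literals. -/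
/-- The 'caterpillar' Boolean function: `cat 1 = x 1` and
`cat (k+1) = (¬ x (2k) ∧ x (2k+1)) ∨ (x (2k) ∧ cat k)`,
where `cat k` depends only on the (fresh w.r.t. `x (2k)`, `x (2k+1)`) variables
`x 1, ..., x (2k-1)`. -/
def cat : ℕ → (ℕ → Bool) → Bool
  | 0, _ => false
  | 1, y => y 1
  | (k + 2), y =>
      (!(y (2 * (k + 1))) && y (2 * (k + 1) + 1)) || (y (2 * (k + 1)) && cat (k + 1) y)

/-! ### Auxiliary development -/

/-- `s` forces `cat k`: every assignment that is `true` on `s` satisfies `cat k`. -/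
def Forces (k : ℕ) (s : Finset ℕ) : Prop :=
  ∀ y : ℕ → Bool, (∀ v ∈ s, y v = true) → cat k y = true

/-- minimal forcing set -/
def MinF (k : ℕ) (s : Finset ℕ) : Prop :=
  Forces k s ∧ ∀ s' ⊂ s, ¬ Forces k s'

lemma cat_agree : ∀ (k : ℕ) (y z : ℕ → Bool),
    (∀ i, 1 ≤ i → i ≤ 2 * k - 1 → y i = z i) → cat k y = cat k z
  | 0, _, _, _ => rfl
  | 1, y, z, h => by
      have := h 1 le_rfl (by omega)
      simp [cat, this]
  | (k + 2), y, z, h => by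
      have h1 : y (2 * (k + 1)) = z (2 * (k + 1)) := h _ (by omega) (by omega)
      have h2 : y (2 * (k + 1) + 1) = z (2 * (k + 1) + 1) := h _ (by omega) (by omega)
      have ih := cat_agree (k + 1) y z (fun i hi hi2 => h i hi (by omega))
      simp [cat, h1, h2, ih]

lemma Forces.mono {k : ℕ} {s s' : Finset ℕ} (hss : s ⊆ s') (h : Forces k s) :
    Forces k s' := fun y hy => h y (fun v hv => hy v (hss hv))

lemma Forces.erase_irrel {k : ℕ} {s : Finset ℕ} {v : ℕ}
    (hv : v = 0 ∨ 2 * k - 1 < v) (h : Forces k s) : Forces k (s.erase v) := by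
  intro y hy
  set y' : ℕ → Bool := Function.update y v true with hy'
  have hsat : ∀ w ∈ s, y' w = true := by
    intro w hw
    by_cases hwv : w = v
    · simp [hy', hwv]
    · simp only [hy', Function.update_of_ne hwv]
      exact hy w (Finset.mem_erase.2 ⟨hwv, hw⟩)
  have hag : cat k y = cat k y' := cat_agree k y y' (fun i hi1 hi2 => by
    have hne : i ≠ v := by omega
    exact (Function.update_of_ne hne true y).symm)
  rw [hag]
  exact h y' hsat

lemma MinF.subset_Icc {k : ℕ} {s : Finset ℕ} (h : MinF k s) :
    s ⊆ Finset.Icc 1 (2 * k - 1) := by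
  intro v hv
  by_contra hvI
  have hv' : v = 0 ∨ 2 * k - 1 < v := by
    simp only [Finset.mem_Icc] at hvI; omega
  exact h.2 (s.erase v) (Finset.erase_ssubset hv) (h.1.erase_irrel hv')

lemma forces_one_iff {s : Finset ℕ} : Forces 1 s ↔ 1 ∈ s := by
  constructor
  · intro h
    have := h (fun v => decide (v ∈ s)) (fun v hv => by simp [hv])
    simpa [cat] using this
  · intro h y hy
    simpa [cat] using hy 1 h

lemma minf_one_iff {s : Finset ℕ} : MinF 1 s ↔ s = {1} := by
  constructor
  · rintro ⟨hf, hmin⟩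
    have h1 : 1 ∈ s := forces_one_iff.1 hf
    by_contra hne
    refine hmin {1} (Finset.ssubset_iff_subset_ne.2
      ⟨Finset.singleton_subset_iff.2 h1, fun h => hne h.symm⟩)
      (forces_one_iff.2 (by simp))
  · rintro rfl
    refine ⟨forces_one_iff.2 (by simp), ?_⟩
    intro s' hs' hf
    have := forces_one_iff.1 hf
    have h1 : s' ⊆ {1} := hs'.subset
    have : (1 : ℕ) ∈ s' := this
    have : s' = {1} := Finset.Subset.antisymm h1 (by simpa using this)
    exact hs'.ne this

lemma forces_succ_iff {k : ℕ} {s : Finset ℕ} :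
    Forces (k + 2) s ↔ (2 * (k + 1) ∈ s ∨ 2 * (k + 1) + 1 ∈ s) ∧ Forces (k + 1) s := by
  constructor
  · intro h
    constructor
    · by_contra hno
      push_neg at hno
      have := h (fun v => decide (v ∈ s)) (fun v hv => by simp [hv])
      simp [cat, hno.1, hno.2] at this
    · intro y hy
      set y' : ℕ → Bool := Function.update y (2 * (k + 1)) true with hy'
      have hsat : ∀ w ∈ s, y' w = true := by
        intro w hw
        by_cases hwv : w = 2 * (k + 1)
        · simp [hy', hwv]
        · simp only [hy', Function.update_of_ne hwv]; exact hy w hw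
      have hc := h y' hsat
      have hagree : cat (k + 1) y = cat (k + 1) y' :=
        cat_agree (k + 1) y y' (fun i hi1 hi2 => by
          have hne : i ≠ 2 * (k + 1) := by omega
          exact (Function.update_of_ne hne true y).symm)
      simp [cat, hy', Function.update_self] at hc
      rwa [hagree]
  · rintro ⟨hmem, hf⟩ y hy
    by_cases h2 : y (2 * (k + 1)) = true
    · simp [cat, h2, hf y hy]
    · have hns : 2 * (k + 1) ∉ s := fun hin => h2 (hy _ hin)
      have h3 : 2 * (k + 1) + 1 ∈ s := hmem.resolve_left hns
      have := hy _ h3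
      simp only [Bool.not_eq_true] at h2
      simp [cat, h2, this]

lemma minf_succ_iff {k : ℕ} {s : Finset ℕ} :
    MinF (k + 2) s ↔ ∃ s₀, MinF (k + 1) s₀ ∧
      (s = insert (2 * (k + 1)) s₀ ∨ s = insert (2 * (k + 1) + 1) s₀) := by
  have hbound : ∀ {v : ℕ}, v = 2 * (k + 1) ∨ v = 2 * (k + 1) + 1 →
      (v = 0 ∨ 2 * (k + 1) - 1 < v) := by rintro v (rfl | rfl) <;> omega
  constructor
  · rintro ⟨hf, hmin⟩
    obtain ⟨hmem, hf1⟩ := forces_succ_iff.1 hf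
    -- not both
    have hnotboth : ¬ (2 * (k + 1) ∈ s ∧ 2 * (k + 1) + 1 ∈ s) := by
      rintro ⟨ha, hb⟩
      refine hmin (s.erase (2 * (k + 1) + 1)) (Finset.erase_ssubset hb) ?_
      refine forces_succ_iff.2 ⟨Or.inl (Finset.mem_erase.2 ⟨by omega, ha⟩), ?_⟩
      exact hf1.erase_irrel (hbound (Or.inr rfl))
    -- pick the one present
    rcases hmem with ha | hb
    · refine ⟨s.erase (2 * (k + 1)), ⟨hf1.erase_irrel (hbound (Or.inl rfl)), ?_⟩,
        Or.inl (Finset.insert_erase ha).symm⟩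
      intro s' hs' hfs'
      refine hmin (insert (2 * (k + 1)) s') ?_ ?_
      · constructor
        · intro w hw
          rcases Finset.mem_insert.1 hw with rfl | hw'
          · exact ha
          · exact Finset.mem_of_mem_erase (hs'.subset hw')
        · intro hsub
          obtain ⟨w, hws', hwn⟩ := Finset.exists_of_ssubset hs'
          have hws : w ∈ s := Finset.mem_of_mem_erase hws'
          have : w ∈ insert (2 * (k + 1)) s' := hsub hws
          rcases Finset.mem_insert.1 this with rfl | hwc
          · exact (Finset.mem_erase.1 hws').1 rfl
          · exact hwn hwc
      · exact forces_succ_iff.2 ⟨Or.inl (Finset.mem_insert_self _ _),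
          hfs'.mono (Finset.subset_insert _ _)⟩
    · refine ⟨s.erase (2 * (k + 1) + 1), ⟨hf1.erase_irrel (hbound (Or.inr rfl)), ?_⟩,
        Or.inr (Finset.insert_erase hb).symm⟩
      intro s' hs' hfs'
      refine hmin (insert (2 * (k + 1) + 1) s') ?_ ?_
      · constructor
        · intro w hw
          rcases Finset.mem_insert.1 hw with rfl | hw'
          · exact hb
          · exact Finset.mem_of_mem_erase (hs'.subset hw')
        · intro hsub
          obtain ⟨w, hws', hwn⟩ := Finset.exists_of_ssubset hs'
          have hws : w ∈ s := Finset.mem_of_mem_erase hws'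
          have : w ∈ insert (2 * (k + 1) + 1) s' := hsub hws
          rcases Finset.mem_insert.1 this with rfl | hwc
          · exact (Finset.mem_erase.1 hws').1 rfl
          · exact hwn hwc
      · exact forces_succ_iff.2 ⟨Or.inr (Finset.mem_insert_self _ _),
          hfs'.mono (Finset.subset_insert _ _)⟩
  · rintro ⟨s₀, hm₀, hins⟩
    have hIcc := hm₀.subset_Icc
    have hnot : 2 * (k + 1) ∉ s₀ ∧ 2 * (k + 1) + 1 ∉ s₀ := by
      constructor <;> · intro hmem
                        have := hIcc hmem
                        simp only [Finset.mem_Icc] at this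
                        omega
    rcases hins with rfl | rfl
    · refine ⟨forces_succ_iff.2 ⟨Or.inl (Finset.mem_insert_self _ _),
        hm₀.1.mono (Finset.subset_insert _ _)⟩, ?_⟩
      intro s' hs' hfs'
      obtain ⟨hmem', hf'⟩ := forces_succ_iff.1 hfs'
      have hb' : 2 * (k + 1) + 1 ∉ s' := by
        intro hmem
        have := hs'.subset hmem
        rcases Finset.mem_insert.1 this with h | h
        · omega
        · exact hnot.2 h
      have ha' : 2 * (k + 1) ∈ s' := hmem'.resolve_right hb'
      have hsub : s'.erase (2 * (k + 1)) ⊆ s₀ := by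
        intro w hw
        obtain ⟨hwn, hws'⟩ := Finset.mem_erase.1 hw
        rcases Finset.mem_insert.1 (hs'.subset hws') with rfl | h
        · exact absurd rfl hwn
        · exact h
      have hfe : Forces (k + 1) (s'.erase (2 * (k + 1))) :=
        hf'.erase_irrel (hbound (Or.inl rfl))
      rcases eq_or_ne (s'.erase (2 * (k + 1))) s₀ with heq | hne
      · apply hs'.ne
        rw [← heq, Finset.insert_erase ha']
      · exact hm₀.2 _ (Finset.ssubset_iff_subset_ne.2 ⟨hsub, hne⟩) hfe
    · refine ⟨forces_succ_iff.2 ⟨Or.inr (Finset.mem_insert_self _ _),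
        hm₀.1.mono (Finset.subset_insert _ _)⟩, ?_⟩
      intro s' hs' hfs'
      obtain ⟨hmem', hf'⟩ := forces_succ_iff.1 hfs'
      have hb' : 2 * (k + 1) ∉ s' := by
        intro hmem
        have := hs'.subset hmem
        rcases Finset.mem_insert.1 this with h | h
        · omega
        · exact hnot.1 h
      have ha' : 2 * (k + 1) + 1 ∈ s' := hmem'.resolve_left hb'
      have hsub : s'.erase (2 * (k + 1) + 1) ⊆ s₀ := by
        intro w hw
        obtain ⟨hwn, hws'⟩ := Finset.mem_erase.1 hw
        rcases Finset.mem_insert.1 (hs'.subset hws') with rfl | h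
        · exact absurd rfl hwn
        · exact h
      have hfe : Forces (k + 1) (s'.erase (2 * (k + 1) + 1)) :=
        hf'.erase_irrel (hbound (Or.inr rfl))
      rcases eq_or_ne (s'.erase (2 * (k + 1) + 1)) s₀ with heq | hne
      · apply hs'.ne
        rw [← heq, Finset.insert_erase ha']
      · exact hm₀.2 _ (Finset.ssubset_iff_subset_ne.2 ⟨hsub, hne⟩) hfe

/-- the explicit family of minimal forcing sets -/
def Tfam : ℕ → Finset (Finset ℕ)
  | 0 => ∅
  | 1 => {{1}}
  | (k + 2) => (Tfam (k + 1)).image (insert (2 * (k + 1))) ∪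
      (Tfam (k + 1)).image (insert (2 * (k + 1) + 1))

lemma Tfam_subset_Icc : ∀ (k : ℕ), ∀ s ∈ Tfam k, s ⊆ Finset.Icc 1 (2 * k - 1)
  | 0, s, hs => by simp [Tfam] at hs
  | 1, s, hs => by
      simp only [Tfam, Finset.mem_singleton] at hs
      subst hs; intro v hv; simp at hv; simp [hv]
  | (k + 2), s, hs => by
      simp only [Tfam, Finset.mem_union, Finset.mem_image] at hs
      rcases hs with ⟨s₀, hs₀, rfl⟩ | ⟨s₀, hs₀, rfl⟩
      · intro v hv
        rcases Finset.mem_insert.1 hv with rfl | hv'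
        · simp only [Finset.mem_Icc]; omega
        · have := Tfam_subset_Icc (k + 1) s₀ hs₀ hv'
          simp only [Finset.mem_Icc] at this ⊢; omega
      · intro v hv
        rcases Finset.mem_insert.1 hv with rfl | hv'
        · simp only [Finset.mem_Icc]; omega
        · have := Tfam_subset_Icc (k + 1) s₀ hs₀ hv'
          simp only [Finset.mem_Icc] at this ⊢; omega

lemma Tfam_card_mem : ∀ (k : ℕ), ∀ s ∈ Tfam k, s.card = k
  | 0, s, hs => by simp [Tfam] at hs
  | 1, s, hs => by
      simp only [Tfam, Finset.mem_singleton] at hs; subst hs; simp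
  | (k + 2), s, hs => by
      simp only [Tfam, Finset.mem_union, Finset.mem_image] at hs
      rcases hs with ⟨s₀, hs₀, rfl⟩ | ⟨s₀, hs₀, rfl⟩
      · have hnot : 2 * (k + 1) ∉ s₀ := fun hmem => by
          have := Tfam_subset_Icc (k + 1) s₀ hs₀ hmem
          simp only [Finset.mem_Icc] at this; omega
        rw [Finset.card_insert_of_notMem hnot, Tfam_card_mem (k + 1) s₀ hs₀]
      · have hnot : 2 * (k + 1) + 1 ∉ s₀ := fun hmem => by
          have := Tfam_subset_Icc (k + 1) s₀ hs₀ hmem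
          simp only [Finset.mem_Icc] at this; omega
        rw [Finset.card_insert_of_notMem hnot, Tfam_card_mem (k + 1) s₀ hs₀]

lemma Tfam_card : ∀ (k : ℕ), 1 ≤ k → (Tfam k).card = 2 ^ (k - 1)
  | 0, h => by omega
  | 1, _ => by simp [Tfam]
  | (k + 2), _ => by
      have hfresh : ∀ (a : ℕ), (a = 2 * (k + 1) ∨ a = 2 * (k + 1) + 1) →
          ∀ s ∈ Tfam (k + 1), a ∉ s := by
        intro a ha s hs hmem
        have := Tfam_subset_Icc (k + 1) s hs hmem
        simp only [Finset.mem_Icc] at this; omega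
      have hinj : ∀ (a : ℕ), (a = 2 * (k + 1) ∨ a = 2 * (k + 1) + 1) →
          ((Tfam (k + 1)).image (insert a)).card = (Tfam (k + 1)).card := by
        intro a ha
        apply Finset.card_image_of_injOn
        intro s₁ h₁ s₂ h₂ heq
        have e₁ : (insert a s₁).erase a = s₁ :=
          Finset.erase_insert (hfresh a ha s₁ h₁)
        have e₂ : (insert a s₂).erase a = s₂ :=
          Finset.erase_insert (hfresh a ha s₂ h₂)
        rw [← e₁, ← e₂, heq]
      have hdisj : Disjoint ((Tfam (k + 1)).image (insert (2 * (k + 1))))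
          ((Tfam (k + 1)).image (insert (2 * (k + 1) + 1))) := by
        rw [Finset.disjoint_left]
        intro s hs1 hs2
        simp only [Finset.mem_image] at hs1 hs2
        obtain ⟨s₁, h₁, rfl⟩ := hs1
        obtain ⟨s₂, h₂, heq⟩ := hs2
        have hmem : 2 * (k + 1) ∈ insert (2 * (k + 1) + 1) s₂ := by
          rw [heq]; exact Finset.mem_insert_self _ _
        rcases Finset.mem_insert.1 hmem with h | h
        · omega
        · exact hfresh _ (Or.inl rfl) s₂ h₂ h
      show ((Tfam (k + 1)).image (insert (2 * (k + 1))) ∪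
          (Tfam (k + 1)).image (insert (2 * (k + 1) + 1))).card = 2 ^ (k + 2 - 1)
      rw [Finset.card_union_of_disjoint hdisj, hinj _ (Or.inl rfl), hinj _ (Or.inr rfl),
        Tfam_card (k + 1) (by omega)]
      rw [show k + 1 - 1 = k from rfl, show k + 2 - 1 = k + 1 from rfl, pow_succ]
      ring

lemma minf_iff_Tfam : ∀ (k : ℕ), 1 ≤ k → ∀ s : Finset ℕ, (MinF k s ↔ s ∈ Tfam k)
  | 0, h => by omega
  | 1, _ => fun s => by rw [minf_one_iff]; simp [Tfam]
  | (k + 2), _ => fun s => by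
      rw [minf_succ_iff]
      constructor
      · rintro ⟨s₀, hm₀, hins⟩
        have := (minf_iff_Tfam (k + 1) (by omega) s₀).1 hm₀
        simp only [Tfam, Finset.mem_union, Finset.mem_image]
        rcases hins with rfl | rfl
        · exact Or.inl ⟨s₀, this, rfl⟩
        · exact Or.inr ⟨s₀, this, rfl⟩
      · intro hs
        simp only [Tfam, Finset.mem_union, Finset.mem_image] at hs
        rcases hs with ⟨s₀, hs₀, rfl⟩ | ⟨s₀, hs₀, rfl⟩
        · exact ⟨s₀, (minf_iff_Tfam (k + 1) (by omega) s₀).2 hs₀, Or.inl rfl⟩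
        · exact ⟨s₀, (minf_iff_Tfam (k + 1) (by omega) s₀).2 hs₀, Or.inr rfl⟩

/-! ### Bridging terms and finsets of variables -/

/-- positive term on a finset of variables -/
def posTerm (s : Finset ℕ) : Term ℕ := s.image (fun v => (v, true))

lemma posTerm_injective : Function.Injective posTerm := by
  intro s₁ s₂ h
  ext v
  constructor <;> intro hv
  · have : (v, true) ∈ posTerm s₂ := by
      rw [← h]; exact Finset.mem_image_of_mem _ hv
    simp only [posTerm, Finset.mem_image] at this
    obtain ⟨w, hw, he⟩ := this
    cases he; exact hw
  · have : (v, true) ∈ posTerm s₁ := by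
      rw [h]; exact Finset.mem_image_of_mem _ hv
    simp only [posTerm, Finset.mem_image] at this
    obtain ⟨w, hw, he⟩ := this
    cases he; exact hw

lemma mem_posTerm {s : Finset ℕ} {p : ℕ × Bool} :
    p ∈ posTerm s ↔ p.1 ∈ s ∧ p.2 = true := by
  simp only [posTerm, Finset.mem_image]
  constructor
  · rintro ⟨w, hw, rfl⟩; exact ⟨hw, rfl⟩
  · rintro ⟨h1, h2⟩
    exact ⟨p.1, h1, by rw [← h2]⟩

lemma posTerm_card (s : Finset ℕ) : (posTerm s).card = s.card :=
  Finset.card_image_of_injective _ (fun a b h => by cases h; rfl)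

lemma posTerm_subset_iff {s₁ s₂ : Finset ℕ} : posTerm s₁ ⊆ posTerm s₂ ↔ s₁ ⊆ s₂ := by
  constructor
  · intro h v hv
    have := h (Finset.mem_image_of_mem _ hv)
    exact (mem_posTerm.1 this).1
  · intro h p hp
    rw [mem_posTerm] at hp ⊢
    exact ⟨h hp.1, hp.2⟩

lemma posTerm_ssubset_iff {s₁ s₂ : Finset ℕ} : posTerm s₁ ⊂ s₂.image (fun v => (v, true)) ↔ s₁ ⊂ s₂ := by
  show posTerm s₁ ⊂ posTerm s₂ ↔ _
  constructor
  · rintro ⟨h1, h2⟩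
    refine ⟨posTerm_subset_iff.1 h1, fun hc => h2 (posTerm_subset_iff.2 hc)⟩
  · rintro ⟨h1, h2⟩
    exact ⟨posTerm_subset_iff.2 h1, fun hc => h2 (posTerm_subset_iff.1 hc)⟩

lemma sat_posTerm {s : Finset ℕ} {y : ℕ → Bool} :
    Term.sat (posTerm s) y ↔ ∀ v ∈ s, y v = true := by
  constructor
  · intro h v hv
    exact h (v, true) (mem_posTerm.2 ⟨hv, rfl⟩)
  · intro h p hp
    obtain ⟨h1, h2⟩ := mem_posTerm.1 hp
    rw [h2]; exact h p.1 h1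

lemma posTerm_consistent (s : Finset ℕ) : Term.consistent (posTerm s) := by
  intro v ⟨_, h⟩
  exact absurd (mem_posTerm.1 h).2 (by simp)

lemma eq_posTerm_of_sat_allones {t : Term ℕ} (h : Term.sat t (fun _ => true)) :
    t = posTerm (t.image Prod.fst) := by
  ext p
  rw [mem_posTerm]
  constructor
  · intro hp
    refine ⟨Finset.mem_image_of_mem _ hp, (h p hp).symm⟩
  · rintro ⟨h1, h2⟩
    simp only [Finset.mem_image] at h1
    obtain ⟨q, hq, hfst⟩ := h1
    have : q.2 = true := (h q hq).symm
    have : q = p := by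
      ext
      · exact hfst
      · rw [this, h2]
    rwa [← this]

lemma implicant_posTerm_iff {k : ℕ} {s : Finset ℕ} :
    Implicant (cat k) (posTerm s) ↔ Forces k s := by
  constructor
  · intro ⟨_, h⟩ y hy
    exact h y (sat_posTerm.2 hy)
  · intro h
    exact ⟨posTerm_consistent s, fun y hy => h y (sat_posTerm.1 hy)⟩

lemma prime_posTerm_iff {k : ℕ} {s : Finset ℕ} :
    PrimeImplicant (cat k) (posTerm s) ↔ MinF k s := by
  constructor
  · rintro ⟨himp, hmin⟩
    refine ⟨implicant_posTerm_iff.1 himp, ?_⟩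
    intro s' hs' hf
    exact hmin (posTerm s') (posTerm_ssubset_iff.2 hs') (implicant_posTerm_iff.2 hf)
  · rintro ⟨hf, hmin⟩
    refine ⟨implicant_posTerm_iff.2 hf, ?_⟩
    intro u hu himp
    -- u is a positive term, being a subset of posTerm s
    have husat : Term.sat u (fun _ => true) := by
      intro p hp
      exact ((mem_posTerm.1 (hu.subset hp)).2).symm
    have hurep : u = posTerm (u.image Prod.fst) := eq_posTerm_of_sat_allones husat
    rw [hurep] at hu himp
    exact hmin _ (posTerm_ssubset_iff.1 hu) (implicant_posTerm_iff.1 himp)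

lemma suff_iff {k : ℕ} {t : Term ℕ} :
    SuffReason (cat k) (fun _ => true) t ↔ ∃ s : Finset ℕ, MinF k s ∧ t = posTerm s := by
  constructor
  · rintro ⟨hp, hsat⟩
    refine ⟨t.image Prod.fst, ?_, eq_posTerm_of_sat_allones hsat⟩
    rw [← prime_posTerm_iff, ← eq_posTerm_of_sat_allones hsat]
    exact hp
  · rintro ⟨s, hm, rfl⟩
    refine ⟨prime_posTerm_iff.2 hm, ?_⟩
    rw [sat_posTerm]
    intro v _; rfl

/-- For the all-ones instance, the number of minimal sufficient reasons given `cat k`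
is `2^(k-1)`, and each minimal sufficient reason contains exactly `k` literals. -/
theorem stmt_9 (k : ℕ) (hk : 1 ≤ k) :
    {t : Term ℕ | MinSuffReason (cat k) (fun _ => true) t}.ncard = 2 ^ (k - 1) ∧
    ∀ t : Term ℕ, MinSuffReason (cat k) (fun _ => true) t → t.card = k := by
  have hcard : ∀ t : Term ℕ, SuffReason (cat k) (fun _ => true) t → t.card = k := by
    intro t ht
    obtain ⟨s, hm, rfl⟩ := suff_iff.1 ht
    rw [posTerm_card]
    exact Tfam_card_mem k s ((minf_iff_Tfam k hk s).1 hm)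
  have hms : ∀ t : Term ℕ, MinSuffReason (cat k) (fun _ => true) t ↔
      SuffReason (cat k) (fun _ => true) t := by
    intro t
    constructor
    · exact fun h => h.1
    · intro h
      refine ⟨h, fun u hu => ?_⟩
      rw [hcard t h, hcard u hu]
  constructor
  · have hset : {t : Term ℕ | MinSuffReason (cat k) (fun _ => true) t} =
        ↑((Tfam k).image posTerm) := by
      ext t
      simp only [Set.mem_setOf_eq, hms, suff_iff, Finset.coe_image, Set.mem_image,
        Finset.mem_coe]
      constructor
      · rintro ⟨s, hm, rfl⟩
        exact ⟨s, (minf_iff_Tfam k hk s).1 hm, rfl⟩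
      · rintro ⟨s, hs, rfl⟩
        exact ⟨s, (minf_iff_Tfam k hk s).2 hs, rfl⟩
    rw [hset, Set.ncard_coe_finset,
      Finset.card_image_of_injective _ posTerm_injective, Tfam_card k hk]
  · intro t ht
    exact hcard t ((hms t).1 ht)
end

section
/- Let f : {0,1}^n → {0,1} be a Boolean function and x an instance with f(x) = 1. The disjunction of all sufficient reasons for x given f (the 'complete reason' for x given f) is a Boolean function that is monotone with respect to the partial order induced by x (i.e., ordering {0,1} so that the value x_i is the top element in coordinate i). -/
/-- The complete reason for `x` given `f` (the disjunction of all sufficient reasons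
for `x` given `f`) is monotone with respect to the order induced by `x`:
if `y ≤_x z` (i.e., `z` agrees with `x` wherever `y` disagrees less, formally
every coordinate where `z` differs from `x` is one where `y` differs from `x`),
then the complete reason holds at `z` whenever it holds at `y`. -/
theorem stmt_12 {n : ℕ} (f : (Fin n → Bool) → Bool) (x : Fin n → Bool)
    (hx : f x = true) (y z : Fin n → Bool)
    (hle : ∀ i : Fin n, z i ≠ x i → y i ≠ x i)
    (hy : ∃ t : Term (Fin n), SuffReason f x t ∧ Term.sat t y) :
    ∃ t : Term (Fin n), SuffReason f x t ∧ Term.sat t z := by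
  obtain ⟨t, hsr, hty⟩ := hy
  refine ⟨t, hsr, fun p hp => ?_⟩
  have hx' : x p.1 = p.2 := hsr.2 p hp
  have hy' : y p.1 = p.2 := hty p hp
  by_contra h
  exact hle p.1 (fun hz => h (hz ▸ hx')) (hy'.trans hx'.symm)
end

section
/- Let f : {0,1}^n → {0,1} and x an instance with f(x) = 1. The contrastive explanations for x given f and the sufficient reasons for x given f satisfy a minimal hitting set duality: viewing all explanations as subsets of the set of literals of t_x, the contrastive explanations are exactly the minimal hitting sets of the family of sufficient reasons, and vice versa. -/
/-- The term `t_x` consisting of the `n` literals satisfied by the instance `x`. -/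
def termOf {n : ℕ} (x : Fin n → Bool) : Term (Fin n) :=
  Finset.univ.image fun i => (i, x i)

/-- A contrastive explanation for `x` given `f`: a subset `t` of the literals of `x`,
minimal under inclusion, such that `t_x \ t` is not an implicant of `f`. -/
def ContrastiveExpl {n : ℕ} (f : (Fin n → Bool) → Bool) (x : Fin n → Bool)
    (t : Term (Fin n)) : Prop :=
  t ⊆ termOf x ∧ ¬ Implicant f (termOf x \ t) ∧ ∀ s ⊂ t, Implicant f (termOf x \ s)

section Aux

variable {n : ℕ} (f : (Fin n → Bool) → Bool) (x : Fin n → Bool)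

lemma mem_termOf {p : Fin n × Bool} : p ∈ termOf x ↔ x p.1 = p.2 := by
  constructor
  · intro h
    rcases Finset.mem_image.1 h with ⟨i, _, rfl⟩
    rfl
  · intro h
    exact Finset.mem_image.2 ⟨p.1, Finset.mem_univ _, Prod.ext rfl h⟩

lemma sat_iff_subset {t : Term (Fin n)} : Term.sat t x ↔ t ⊆ termOf x := by
  constructor
  · intro h p hp; exact (mem_termOf x).2 (h p hp)
  · intro h p hp; exact (mem_termOf x).1 (h hp)

lemma consistent_of_subset {t : Term (Fin n)} (h : t ⊆ termOf x) : Term.consistent t := by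
  rintro v ⟨h1, h2⟩
  have e1 := (mem_termOf x).1 (h h1)
  have e2 := (mem_termOf x).1 (h h2)
  simp at e1 e2
  rw [e1] at e2; exact Bool.true_eq_false.mp e2

lemma implicant_mono {s t : Term (Fin n)} (hst : s ⊆ t) (ht : t ⊆ termOf x)
    (hs : Implicant f s) : Implicant f t :=
  ⟨consistent_of_subset x ht, fun y hy => hs.2 y fun p hp => hy p (hst hp)⟩

/-- existence of a minimal element below a given member of a family of finsets -/
lemma exists_min (S : Set (Term (Fin n))) :
    ∀ t, t ∈ S → ∃ s ∈ S, s ⊆ t ∧ ∀ s' ⊂ s, s' ∉ S := by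
  intro t
  induction t using Finset.strongInduction with
  | _ t ih =>
    intro ht
    by_cases h : ∀ s' ⊂ t, s' ∉ S
    · exact ⟨t, ht, subset_rfl, h⟩
    · push_neg at h
      obtain ⟨s', hs't, hs'⟩ := h
      obtain ⟨s, hsS, hss', hmin⟩ := ih s' hs't hs'
      exact ⟨s, hsS, hss'.trans hs't.subset, hmin⟩

lemma subset_sdiff_iff {s t : Term (Fin n)} (hs : s ⊆ termOf x) :
    s ⊆ termOf x \ t ↔ t ∩ s = ∅ := by
  rw [Finset.subset_sdiff]
  simp [hs, Finset.disjoint_iff_inter_eq_empty, Finset.inter_comm]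

lemma suff_iff_s17 {t : Term (Fin n)} :
    SuffReason f x t ↔ (t ⊆ termOf x ∧ Implicant f t ∧ ∀ s ⊂ t, ¬ Implicant f s) := by
  unfold SuffReason PrimeImplicant
  rw [sat_iff_subset]
  tauto

lemma impl_iff_exists_suff {t : Term (Fin n)} (ht : t ⊆ termOf x) :
    Implicant f t ↔ ∃ s, SuffReason f x s ∧ s ⊆ t := by
  constructor
  · intro hImp
    obtain ⟨s, hsS, hst, hmin⟩ := exists_min {s | Implicant f s} t hImp
    exact ⟨s, (suff_iff_s17 f x).2 ⟨hst.trans ht, hsS, hmin⟩, hst⟩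
  · rintro ⟨s, hs, hst⟩
    exact implicant_mono f x hst ht (((suff_iff_s17 f x).1 hs).2.1)

lemma impl_sdiff_iff {t : Term (Fin n)} (ht : t ⊆ termOf x) :
    Implicant f (termOf x \ t) ↔ ∃ s, SuffReason f x s ∧ t ∩ s = ∅ := by
  rw [impl_iff_exists_suff f x Finset.sdiff_subset]
  constructor
  · rintro ⟨s, hs, hsub⟩
    exact ⟨s, hs, (subset_sdiff_iff x (((suff_iff_s17 f x).1 hs).1)).1 hsub⟩
  · rintro ⟨s, hs, hsub⟩
    exact ⟨s, hs, (subset_sdiff_iff x (((suff_iff_s17 f x).1 hs).1)).2 hsub⟩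

lemma not_impl_sdiff_iff {t : Term (Fin n)} (ht : t ⊆ termOf x) :
    ¬ Implicant f (termOf x \ t) ↔ ∀ s, SuffReason f x s → (t ∩ s).Nonempty := by
  rw [impl_sdiff_iff f x ht]
  push_neg
  simp [Finset.nonempty_iff_ne_empty]

lemma impl_iff_hits {t : Term (Fin n)} (ht : t ⊆ termOf x) :
    Implicant f t ↔ ∀ s, ContrastiveExpl f x s → (t ∩ s).Nonempty := by
  constructor
  · intro hImp s hC
    rw [Finset.nonempty_iff_ne_empty]
    intro hempty
    have hts : t ⊆ termOf x \ s := by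
      rw [Finset.subset_sdiff]
      exact ⟨ht, Finset.disjoint_iff_inter_eq_empty.2 hempty⟩
    exact hC.2.1 (implicant_mono f x hts Finset.sdiff_subset hImp)
  · intro h
    by_contra hImp
    obtain ⟨s, ⟨hs1, hs2⟩, _, hmin⟩ := exists_min
      {s | s ⊆ termOf x \ t ∧ ¬ Implicant f (termOf x \ s)} (termOf x \ t)
      ⟨subset_rfl, by rwa [Finset.sdiff_sdiff_eq_self ht]⟩
    have hC : ContrastiveExpl f x s := by
      refine ⟨hs1.trans Finset.sdiff_subset, hs2, fun s' hs' => ?_⟩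
      by_contra hns'
      exact hmin s' hs' ⟨(hs'.subset).trans hs1, hns'⟩
    have := h s hC
    rw [Finset.nonempty_iff_ne_empty] at this
    exact this ((subset_sdiff_iff x (hs1.trans Finset.sdiff_subset)).1 hs1)

lemma not_impl_iff {t : Term (Fin n)} (ht : t ⊆ termOf x) :
    ¬ Implicant f t ↔ ∃ s, ContrastiveExpl f x s ∧ t ∩ s = ∅ := by
  rw [impl_iff_hits f x ht]
  push_neg
  simp [Finset.nonempty_iff_ne_empty]

end Aux

/-- Minimal hitting set duality between contrastive explanations and sufficient reasons:
the contrastive explanations for `x` given `f` are exactly the minimal hitting sets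
(within the literals of `x`) of the family of sufficient reasons, and vice versa. -/
theorem stmt_17 {n : ℕ} (f : (Fin n → Bool) → Bool) (x : Fin n → Bool)
    (hx : f x = true) (t : Term (Fin n)) :
    (ContrastiveExpl f x t ↔
      (t ⊆ termOf x ∧ (∀ s : Term (Fin n), SuffReason f x s → (t ∩ s).Nonempty) ∧
        ∀ t' ⊂ t, ∃ s : Term (Fin n), SuffReason f x s ∧ t' ∩ s = ∅)) ∧
    (SuffReason f x t ↔
      (t ⊆ termOf x ∧ (∀ s : Term (Fin n), ContrastiveExpl f x s → (t ∩ s).Nonempty) ∧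
        ∀ t' ⊂ t, ∃ s : Term (Fin n), ContrastiveExpl f x s ∧ t' ∩ s = ∅)) := by
  constructor
  · constructor
    · rintro ⟨ht, hni, hmin⟩
      refine ⟨ht, (not_impl_sdiff_iff f x ht).1 hni, fun t' ht' => ?_⟩
      exact (impl_sdiff_iff f x (ht'.subset.trans ht)).1 (hmin t' ht')
    · rintro ⟨ht, hhit, hmin⟩
      refine ⟨ht, (not_impl_sdiff_iff f x ht).2 hhit, fun t' ht' => ?_⟩
      exact (impl_sdiff_iff f x (ht'.subset.trans ht)).2 (hmin t' ht')
  · constructor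
    · intro hS
      obtain ⟨ht, hImp, hmin⟩ := (suff_iff_s17 f x).1 hS
      refine ⟨ht, (impl_iff_hits f x ht).1 hImp, fun t' ht' => ?_⟩
      exact (not_impl_iff f x (ht'.subset.trans ht)).1 (hmin t' ht')
    · rintro ⟨ht, hhit, hmin⟩
      refine (suff_iff_s17 f x).2 ⟨ht, (impl_iff_hits f x ht).2 hhit, fun t' ht' => ?_⟩
      exact (not_impl_iff f x (ht'.subset.trans ht)).2 (hmin t' ht')
end
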